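/- For all n ≥ k ≥ r ≥ 1, any n-vertex graph containing no copy of K_{k+1} has at most as many copies of K_r as the Turán graph T(n,k); that is, ex(n, K_r, K_{k+1}) = N(K_r, T(n,k)). -/

import Mathlib

open SimpleGraph Filter Asymptotics Finset

/-- The set of copies of `H` in `G`: subgraphs of `G` isomorphic to `H`. -/
def SimpleGraph.copySet {α V : Type*} (H : SimpleGraph α) (G : SimpleGraph V) :
    Set G.Subgraph := {C | Nonempty (H ≃g C.coe)}

/-- The number of (unlabeled) copies of `H` in `G`, i.e. `N(H,G)`. -/
noncomputable def copyCount {α V : Type*} (H : SimpleGraph α) (G : SimpleGraph V) : ℕ :=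
  (H.copySet G).ncard

/-- `G` is `F`-free: it contains no subgraph isomorphic to `F`. -/
def FFree {β V : Type*} (F : SimpleGraph β) (G : SimpleGraph V) : Prop := F.copySet G = ∅

/-- The generalized Turán number `ex(n, H, F)`. -/
noncomputable def exGen {α β : Type*} (n : ℕ) (H : SimpleGraph α) (F : SimpleGraph β) : ℕ :=
  sSup {m | ∃ G : SimpleGraph (Fin n), FFree F G ∧ copyCount H G = m}

/-- The complete multipartite graph with part sizes `a 0, …, a (k-1)`. -/
def CMP (k : ℕ) (a : Fin k → ℕ) : SimpleGraph (Σ i : Fin k, Fin (a i)) :=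
  SimpleGraph.comap Sigma.fst ⊤


/-! ### generic ncard bijection helper -/

lemma ncard_eq_of_bij {α β : Type*} {s : Set α} {t : Set β} {f : α → β}
    (h : Set.BijOn f s t) : t.ncard = s.ncard := by
  rw [← h.image_eq]; exact Set.ncard_image_of_injOn h.injOn

/-- number of r-cliques of G contained in A -/
noncomputable def cN {V : Type*} (G : SimpleGraph V) (r : ℕ) (A : Finset V) : ℕ :=
  {s : Finset V | G.IsNClique r s ∧ s ⊆ A}.ncard

/-! ### bridge: copyCount of complete graph = clique count -/

section bridge
variable {V : Type*} [Fintype V] [DecidableEq V] {G : SimpleGraph V} {r : ℕ}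

lemma copy_mem_iff {C : G.Subgraph} :
    C ∈ (completeGraph (Fin r)).copySet G ↔
      ∃ s : Finset V, G.IsNClique r s ∧ C = SimpleGraph.Subgraph.induce ⊤ ↑s := by
  constructor
  · rintro ⟨e⟩
    have hadj : ∀ x y : C.verts, C.coe.Adj x y ↔ x ≠ y := by
      intro x y
      obtain ⟨a, rfl⟩ := e.surjective x
      obtain ⟨b, rfl⟩ := e.surjective y
      rw [e.map_adj_iff]
      exact ⟨fun h hc => h (e.toEquiv.injective hc), fun h hc => h (congrArg e hc)⟩
    have hvfin : C.verts.Finite := Set.toFinite _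
    haveI : Fintype C.verts := hvfin.fintype
    refine ⟨C.verts.toFinset, ⟨?_, ?_⟩, ?_⟩
    · intro x hx y hy hxy
      simp only [Finset.mem_coe, Set.mem_toFinset] at hx hy
      exact C.adj_sub ((hadj ⟨x, hx⟩ ⟨y, hy⟩).2 (by simpa [Subtype.ext_iff] using hxy))
    · rw [Set.toFinset_card, ← Fintype.card_fin r]
      exact (Fintype.card_congr e.toEquiv).symm
    · ext x y
      · simp
      · simp only [SimpleGraph.Subgraph.induce_adj, Set.coe_toFinset, Subgraph.top_adj]
        constructor
        · intro h
          exact ⟨C.edge_vert h, C.edge_vert h.symm, C.adj_sub h⟩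
        · rintro ⟨hx, hy, hxy⟩
          exact (hadj ⟨x, hx⟩ ⟨y, hy⟩).2 (by simpa [Subtype.ext_iff] using hxy.ne)
  · rintro ⟨s, hs, rfl⟩
    have e1 : Fin r ≃ (↑(↑s : Set V)) := by
      refine (Finset.equivFinOfCardEq hs.2).symm.trans (Equiv.subtypeEquivRight ?_)
      intro a; simp
    refine ⟨⟨e1, ?_⟩⟩
    intro a b
    simp only [Subgraph.coe_adj, Subgraph.induce_adj, Subgraph.top_adj]
    constructor
    · rintro ⟨_, _, h⟩
      intro hc
      exact (G.ne_of_adj h) (by rw [hc])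
    · intro hab
      have hne : (e1 a : V) ≠ (e1 b : V) := by
        intro hc
        exact hab (e1.injective (Subtype.ext hc))
      exact ⟨(e1 a).2, (e1 b).2, hs.1 (e1 a).2 (e1 b).2 hne⟩

lemma copyCount_eq_cN : _root_.copyCount (completeGraph (Fin r)) G = cN G r Finset.univ := by
  unfold _root_.copyCount cN
  refine ncard_eq_of_bij (f := fun s : Finset V => SimpleGraph.Subgraph.induce ⊤ ↑s) ?_
  refine ⟨?_, ?_, ?_⟩
  · intro s hs
    rw [Set.mem_setOf_eq] at hs
    exact copy_mem_iff.2 ⟨s, hs.1, rfl⟩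
  · intro s hs t ht h
    have : (↑s : Set V) = ↑t := congrArg SimpleGraph.Subgraph.verts h
    exact_mod_cast this
  · intro C hC
    obtain ⟨s, hs, rfl⟩ := copy_mem_iff.1 hC
    exact ⟨s, ⟨hs, by simp⟩, rfl⟩

lemma fFree_iff_cliqueFree {k : ℕ} :
    FFree (completeGraph (Fin (k+1))) G ↔ G.CliqueFree (k+1) := by
  constructor
  · intro h s hs
    have h2 : SimpleGraph.Subgraph.induce ⊤ ↑s ∈ (completeGraph (Fin (k+1))).copySet G :=
      copy_mem_iff.2 ⟨s, hs, rfl⟩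
    rw [FFree] at h
    rw [h] at h2
    exact h2
  · intro h
    rw [FFree, Set.eq_empty_iff_forall_notMem]
    intro C hC
    obtain ⟨s, hs, -⟩ := copy_mem_iff.1 hC
    exact h s hs

end bridge

section cnlemmas
variable {V : Type*} [Fintype V] [DecidableEq V] {G : SimpleGraph V} {r : ℕ} {A : Finset V}

lemma ncard_eq_of_bij' {α β : Type*} {s : Set α} {t : Set β} {f : α → β}
    (h : Set.BijOn f s t) : t.ncard = s.ncard := by
  rw [← h.image_eq]; exact Set.ncard_image_of_injOn h.injOn

lemma cN_one : cN G 1 A = A.card := by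
  unfold cN
  rw [← Set.ncard_coe_finset A]
  refine ncard_eq_of_bij' (f := fun a : V => ({a} : Finset V)) ⟨?_, ?_, ?_⟩
  · intro a ha
    exact ⟨isNClique_singleton.2 rfl, Finset.singleton_subset_iff.2 ha⟩
  · intro a _ b _ h
    simpa using h
  · rintro s ⟨hs, hsA⟩
    obtain ⟨a, rfl⟩ := isNClique_one.1 hs
    exact ⟨a, Finset.singleton_subset_iff.1 hsA, rfl⟩

lemma cN_le_choose : cN G r A ≤ A.card.choose r := by
  unfold cN
  calc {s : Finset V | G.IsNClique r s ∧ s ⊆ A}.ncard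
      ≤ (↑(A.powersetCard r) : Set (Finset V)).ncard := by
        refine Set.ncard_le_ncard ?_ (Set.toFinite _)
        rintro s ⟨hs, hsA⟩
        simp [Finset.mem_powersetCard, hsA, hs.2]
    _ = (A.powersetCard r).card := Set.ncard_coe_finset _
    _ = A.card.choose r := Finset.card_powersetCard r A

lemma cN_split [DecidableRel G.Adj] {v : V} (hv : v ∈ A) :
    cN G (r+1) A = cN G (r+1) (A.erase v) + cN G r (A ∩ G.neighborFinset v) := by
  unfold cN
  have hsplit : {s : Finset V | G.IsNClique (r+1) s ∧ s ⊆ A}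
      = {s : Finset V | (G.IsNClique (r+1) s ∧ s ⊆ A) ∧ v ∉ s}
        ∪ {s : Finset V | (G.IsNClique (r+1) s ∧ s ⊆ A) ∧ v ∈ s} := by
    ext s; by_cases h : v ∈ s <;> simp [h]
  rw [hsplit, Set.ncard_union_eq ?_ (Set.toFinite _) (Set.toFinite _)]
  · congr 1
    · congr 1
      ext s
      simp only [Set.mem_setOf_eq]
      constructor
      · rintro ⟨⟨h1, h2⟩, h3⟩
        exact ⟨h1, fun x hx => Finset.mem_erase.2 ⟨fun hc => h3 (hc ▸ hx), h2 hx⟩⟩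
      · rintro ⟨h1, h2⟩
        exact ⟨⟨h1, h2.trans (Finset.erase_subset _ _)⟩, fun hc => (Finset.mem_erase.1 (h2 hc)).1 rfl⟩
    · refine ncard_eq_of_bij' (f := fun t : Finset V => insert v t)
        (s := {s : Finset V | G.IsNClique r s ∧ s ⊆ A ∩ G.neighborFinset v})
        (t := {s : Finset V | (G.IsNClique (r+1) s ∧ s ⊆ A) ∧ v ∈ s}) ⟨?_, ?_, ?_⟩
      · rintro t ⟨ht, htA⟩
        have hvt : v ∉ t := fun hc => G.notMem_neighborFinset_self v ((Finset.mem_inter.1 (htA hc)).2)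
        refine ⟨⟨ht.insert fun w hw => ?_, ?_⟩, Finset.mem_insert_self _ _⟩
        · exact (G.mem_neighborFinset v w).1 (Finset.mem_inter.1 (htA hw)).2
        · intro x hx
          rcases Finset.mem_insert.1 hx with rfl | hx
          · exact hv
          · exact (Finset.mem_inter.1 (htA hx)).1
      · rintro t ⟨ht, htA⟩ t' ⟨ht', htA'⟩ h
        have hvt : v ∉ t := fun hc => G.notMem_neighborFinset_self v ((Finset.mem_inter.1 (htA hc)).2)
        have hvt' : v ∉ t' := fun hc => G.notMem_neighborFinset_self v ((Finset.mem_inter.1 (htA' hc)).2)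
        have := congrArg (Finset.erase · v) h
        simpa [Finset.erase_insert hvt, Finset.erase_insert hvt'] using this
      · rintro s ⟨⟨hs, hsA⟩, hvs⟩
        refine ⟨s.erase v, ⟨⟨hs.1.subset (by exact_mod_cast Finset.erase_subset _ _), ?_⟩, ?_⟩,
          Finset.insert_erase hvs⟩
        · rw [Finset.card_erase_of_mem hvs, hs.2]; omega
        · intro x hx
          have hxv := Finset.mem_erase.1 hx
          refine Finset.mem_inter.2 ⟨hsA hxv.2, (G.mem_neighborFinset v x).2 ?_⟩
          exact hs.1 (by exact_mod_cast hvs) (by exact_mod_cast hxv.2) (Ne.symm hxv.1)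
  · rw [Set.disjoint_left]
    rintro s ⟨-, h1⟩ ⟨-, h2⟩
    exact h1 h2

end cnlemmas

/-! ### transfer lemma -/

lemma cN_transfer {V W : Type*} [Fintype V] [Fintype W] [DecidableEq V] [DecidableEq W]
    (G : SimpleGraph V) (H : SimpleGraph W) (f : W → V) (hinj : Function.Injective f)
    {A : Finset V} (him : ∀ x, x ∈ A ↔ ∃ y, f y = x)
    (hadj : ∀ y y', G.Adj (f y) (f y') ↔ H.Adj y y') (r : ℕ) :
    cN G r A = cN H r Finset.univ := by
  unfold cN
  have emb : H ↪g G := ⟨⟨f, hinj⟩, by intro a b; exact hadj a b⟩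
  refine ncard_eq_of_bij' (f := fun s : Finset W => s.map ⟨f, hinj⟩) ⟨?_, ?_, ?_⟩
  · rintro s ⟨hs, -⟩
    refine ⟨⟨?_, by rw [Finset.card_map, hs.2]⟩, ?_⟩
    · intro x hx y hy hxy
      rw [Finset.mem_coe, Finset.mem_map] at hx hy
      obtain ⟨a, ha, rfl⟩ := hx
      obtain ⟨b, hb, rfl⟩ := hy
      exact (hadj a b).2 (hs.1 ha hb (fun hc => hxy (congrArg f hc)))
    · intro x hx
      obtain ⟨y, -, rfl⟩ := Finset.mem_map.1 hx
      exact (him (f y)).2 ⟨y, rfl⟩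
  · intro s _ t _ h
    exact Finset.map_injective _ h
  · rintro s ⟨hs, hsA⟩
    classical
    have hmap : (s.preimage f hinj.injOn).map ⟨f, hinj⟩ = s := by
      rw [Finset.map_eq_image]
      simp only [Function.Embedding.coeFn_mk]
      rw [Finset.image_preimage]
      refine Finset.filter_true_of_mem (fun x hx => ?_)
      obtain ⟨y, hy⟩ := (him x).1 (hsA hx)
      exact ⟨y, hy⟩
    refine ⟨s.preimage f hinj.injOn, ⟨⟨?_, ?_⟩, Finset.subset_univ _⟩, hmap⟩
    · intro a ha b hb hab
      rw [Finset.mem_coe, Finset.mem_preimage] at ha hb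
      exact (hadj a b).1 (hs.1 ha hb (fun hc => hab (hinj hc)))
    · have := congrArg Finset.card hmap
      rw [Finset.card_map] at this
      rw [this, hs.2]


lemma cN_mono_emb {V W : Type*} [Fintype V] [Fintype W] {G : SimpleGraph V} {H : SimpleGraph W}
    (emb : H ↪g G) (r : ℕ) : cN H r Finset.univ ≤ cN G r Finset.univ := by
  unfold cN
  refine Set.ncard_le_ncard_of_injOn (fun s => s.map emb.toEmbedding) ?_ ?_ (Set.toFinite _)
  · rintro s ⟨hs, -⟩
    refine ⟨⟨?_, by rw [Finset.card_map, hs.2]⟩, Finset.subset_univ _⟩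
    intro x hx y hy hxy
    rw [Finset.mem_coe, Finset.mem_map] at hx hy
    obtain ⟨a, ha, rfl⟩ := hx
    obtain ⟨b, hb, rfl⟩ := hy
    exact emb.map_adj_iff.2 (hs.1 ha hb (fun hc => hxy (congrArg emb hc)))
  · intro s _ t _ h
    exact Finset.map_injective _ h

/-- clique numbers of Turán graphs -/
noncomputable def tN (r n k : ℕ) : ℕ := cN (turanGraph n k) r Finset.univ

lemma tN_mono (r k : ℕ) {m m' : ℕ} (h : m ≤ m') : tN r m k ≤ tN r m' k := by
  refine cN_mono_emb ⟨Fin.castLEEmb h, ?_⟩ r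
  intro a b
  simp [turanGraph]

lemma tN_of_le {n k : ℕ} (hnk : n ≤ k) (r : ℕ) : tN r n k = n.choose r := by
  unfold tN cN
  have : {s : Finset (Fin n) | (turanGraph n k).IsNClique r s ∧ s ⊆ Finset.univ}
      = ↑(Finset.powersetCard r (Finset.univ : Finset (Fin n))) := by
    ext s
    simp only [Set.mem_setOf_eq, Finset.mem_coe, Finset.mem_powersetCard]
    constructor
    · rintro ⟨hs, -⟩
      exact ⟨Finset.subset_univ _, hs.2⟩
    · rintro ⟨-, hcard⟩
      refine ⟨⟨?_, hcard⟩, Finset.subset_univ _⟩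
      intro x _ y _ hxy
      show (x : ℕ) % k ≠ (y : ℕ) % k
      rw [Nat.mod_eq_of_lt (lt_of_lt_of_le x.2 hnk), Nat.mod_eq_of_lt (lt_of_lt_of_le y.2 hnk)]
      exact fun hc => hxy (Fin.ext hc)
  rw [this, Set.ncard_coe_finset, Finset.card_powersetCard, Finset.card_univ, Fintype.card_fin]

/-! ### counting residues -/

lemma succ_divmod (j N : ℕ) (hj : 0 < j) :
    ((N+1)/j = N/j ∧ (N+1)%j = N%j + 1 ∧ N%j+1 < j)
      ∨ ((N+1)/j = N/j + 1 ∧ (N+1)%j = 0 ∧ N%j+1 = j) := by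
  rcases Nat.lt_or_ge (N % j + 1) j with h | h
  · left
    have key : (N + 1) / j = N / j ∧ (N + 1) % j = N % j + 1 := by
      refine (Nat.div_mod_unique hj).2 ⟨?_, h⟩
      have := Nat.mod_add_div N j
      omega
    exact ⟨key.1, key.2, h⟩
  · right
    have hje : N % j + 1 = j := le_antisymm (Nat.mod_lt N hj) h
    have key : (N + 1) / j = N / j + 1 ∧ (N + 1) % j = 0 := by
      refine (Nat.div_mod_unique hj).2 ⟨?_, hj⟩
      have := Nat.mod_add_div N j
      have : j * (N / j + 1) = j * (N / j) + j := by ring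
      omega
    exact ⟨key.1, key.2, hje⟩

lemma count_mod_fin (j : ℕ) (hj : 0 < j) (i : ℕ) (hij : i < j) (N : ℕ) :
    (Finset.univ.filter (fun x : Fin N => (x : ℕ) % j = i)).card
      = N / j + if i < N % j then 1 else 0 := by
  induction N with
  | zero =>
    simp
  | succ N ih =>
    have hcomp : ((fun x : Fin (N+1) => (x : ℕ) % j = i) ∘ Fin.castSuccEmb)
        = fun x : Fin N => (x : ℕ) % j = i := by
      funext x; simp [Fin.castSuccEmb]
    by_cases hc : N % j = i
    · rw [Fin.univ_castSuccEmb, Finset.filter_cons, if_pos (by simpa using hc),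
        Finset.card_cons, Finset.filter_map]
      simp only [hcomp]
      rw [Finset.card_map, ih]
      rcases succ_divmod j N hj with ⟨hd, hm, hlt⟩ | ⟨hd, hm, heq⟩ <;> split_ifs <;> omega
    · rw [Fin.univ_castSuccEmb, Finset.filter_cons, if_neg (by simpa using hc),
        Finset.filter_map]
      simp only [hcomp]
      rw [Finset.card_map, ih]
      rcases succ_divmod j N hj with ⟨hd, hm, hlt⟩ | ⟨hd, hm, heq⟩ <;> split_ifs <;> omega

/-! ### minimum degree lemma -/

lemma exists_small_deg {V : Type*} [Fintype V] [DecidableEq V] (G : SimpleGraph V)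
    [DecidableRel G.Adj] {A : Finset V} {n k : ℕ}
    (hA : A.card = n) (hk : 0 < k) (hn : 0 < n)
    (hfree : ∀ t ⊆ A, ¬ G.IsNClique (k+1) t) :
    ∃ v ∈ A, (A ∩ G.neighborFinset v).card + (n + k - 1)/k ≤ n := by
  by_contra hcon
  push_neg at hcon
  set c := (n + k - 1)/k with hc
  have hc1 : 1 ≤ c := (Nat.one_le_div_iff hk).2 (by omega)
  have hkc : k * c ≤ n + k - 1 := by
    rw [Nat.mul_comm]
    exact Nat.div_mul_le_self _ _
  -- hcon : ∀ v ∈ A, n < (A ∩ N(v)).card + c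
  have greedy : ∀ j, j ≤ k → ∃ t : Finset V, t ⊆ A ∧ G.IsNClique j t ∧
      n + j ≤ (A.filter (fun x => ∀ v ∈ t, G.Adj v x)).card + j * c := by
    intro j
    induction j with
    | zero =>
      intro _
      refine ⟨∅, Finset.empty_subset _, by simp, ?_⟩
      simp [Finset.filter_true_of_mem, hA]
    | succ j ih =>
      intro hjk
      obtain ⟨t, htA, htc, htcard⟩ := ih (by omega)
      set B := A.filter (fun x => ∀ v ∈ t, G.Adj v x) with hB
      have hBne : B.Nonempty := by
        rw [← Finset.card_pos]
        have : j * c + (k - j) * 1 ≤ k * c := by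
          calc j * c + (k - j) * 1 ≤ j * c + (k - j) * c := by
                exact Nat.add_le_add_left (Nat.mul_le_mul_left _ hc1) _
            _ = k * c := by
                rw [← Nat.add_mul]
                congr 1
                omega
        omega
      obtain ⟨w, hw⟩ := hBne
      rw [hB, Finset.mem_filter] at hw
      obtain ⟨hwA, hwadj⟩ := hw
      have hwt : w ∉ t := fun hc' => G.irrefl (hwadj w hc')
      refine ⟨insert w t, ?_, ?_, ?_⟩
      · intro x hx
        rcases Finset.mem_insert.1 hx with rfl | hx
        · exact hwA
        · exact htA hx
      · exact htc.insert (fun b hb => (hwadj b hb).symm)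
      · have hsub : B ∩ (A ∩ G.neighborFinset w)
            ⊆ A.filter (fun x => ∀ v ∈ insert w t, G.Adj v x) := by
          intro x hx
          rw [Finset.mem_inter, hB, Finset.mem_filter, Finset.mem_inter,
            G.mem_neighborFinset] at hx
          rw [Finset.mem_filter]
          refine ⟨hx.1.1, ?_⟩
          intro v hv
          rcases Finset.mem_insert.1 hv with rfl | hv
          · exact hx.2.2
          · exact hx.1.2 v hv
        have hie : B.card + (A ∩ G.neighborFinset w).card
            ≤ (B ∩ (A ∩ G.neighborFinset w)).card + n := by
          have h1 := Finset.card_inter_add_card_union B (A ∩ G.neighborFinset w)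
          have h2 : (B ∪ (A ∩ G.neighborFinset w)) ⊆ A := by
            intro x hx
            rcases Finset.mem_union.1 hx with hx | hx
            · exact Finset.mem_of_mem_filter x hx
            · exact (Finset.mem_inter.1 hx).1
          have h3 := Finset.card_le_card h2
          omega
        have h4 := Finset.card_le_card hsub
        have h5 := hcon w hwA
        have h6 : (j+1) * c = j * c + c := by ring
        omega
  obtain ⟨t, htA, htc, htcard⟩ := greedy k (le_refl k)
  have hBne : (A.filter (fun x => ∀ v ∈ t, G.Adj v x)).Nonempty := by
    rw [← Finset.card_pos]
    omega
  obtain ⟨w, hw⟩ := hBne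
  rw [Finset.mem_filter] at hw
  have hwt : w ∉ t := fun hc' => G.irrefl (hw.2 w hc')
  refine hfree (insert w t) ?_ (htc.insert (fun b hb => (hw.2 b hb).symm))
  intro x hx
  rcases Finset.mem_insert.1 hx with rfl | hx
  · exact hw.1
  · exact htA hx

/-! ### Turán recursion -/

set_option maxHeartbeats 2000000 in
lemma turan_rec {n k r : ℕ} (hk : 2 ≤ k) (hn : 1 ≤ n) :
    tN (r+2) (n-1) k + tN (r+1) (n - (n + k - 1)/k) (k-1) ≤ tN (r+2) n k := by
  have hk0 : 0 < k := by omega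
  have hk1 : 0 < k - 1 := by omega
  set T := turanGraph n k with hT
  obtain ⟨q, hq⟩ : ∃ q, q = (n-1)/k := ⟨_, rfl⟩
  obtain ⟨s, hs⟩ : ∃ s, s = (n-1)%k := ⟨_, rfl⟩
  have hsk : s < k := by rw [hs]; exact Nat.mod_lt _ hk0
  have f1 : k*q + s + 1 = n := by
    rw [hq, hs]
    have h0 := Nat.div_add_mod (n-1) k
    omega
  obtain ⟨m, hm⟩ : ∃ m, m = n - (q+1) := ⟨_, rfl⟩
  have hm2 : m = (k-1)*q + s := by
    have h1 : (k-1)*q = k*q - q := by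
      rw [Nat.sub_mul, Nat.one_mul]
    have h2 : q ≤ k*q := Nat.le_mul_of_pos_left q hk0
    omega
  -- div/mod facts for n by k
  have hnmod : (n/k = q ∧ n%k = s+1 ∧ s+1 < k) ∨ (n/k = q+1 ∧ n%k = 0 ∧ s+1 = k) := by
    rcases Nat.lt_or_ge (s+1) k with h | h
    · left
      have := (Nat.div_mod_unique hk0 (a := n) (b := k) (c := s+1) (d := q)).2 ⟨by omega, h⟩
      exact ⟨this.1, this.2, h⟩
    · right
      have hr : k*(q+1) = k*q + k := by ring
      have := (Nat.div_mod_unique hk0 (a := n) (b := k) (c := 0) (d := q+1)).2 ⟨by omega, hk0⟩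
      exact ⟨this.1, this.2, by omega⟩
  -- div/mod facts for m by k-1
  have hmmod : (m/(k-1) = q ∧ m%(k-1) = s ∧ s < k-1) ∨ (m/(k-1) = q+1 ∧ m%(k-1) = 0 ∧ s = k-1) := by
    rcases Nat.lt_or_ge s (k-1) with h | h
    · left
      have := (Nat.div_mod_unique hk1 (a := m) (b := k-1) (c := s) (d := q)).2 ⟨by omega, h⟩
      exact ⟨this.1, this.2, h⟩
    · right
      have hr : (k-1)*(q+1) = (k-1)*q + (k-1) := by ring
      have := (Nat.div_mod_unique hk1 (a := m) (b := k-1) (c := 0) (d := q+1)).2 ⟨by omega, hk1⟩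
      exact ⟨this.1, this.2, by omega⟩
  have hceil : (n + k - 1)/k = q + 1 := by
    have hr : k*(q+1) = k*q + k := by ring
    have := (Nat.div_mod_unique hk0 (a := n+k-1) (b := k) (c := s) (d := q+1)).2 ⟨by omega, hsk⟩
    exact this.1
  rw [hceil]
  set v : Fin n := ⟨n-1, by omega⟩ with hv
  have hvs : ((v : Fin n) : ℕ) % k = s := by rw [hs]
  -- membership in the neighborhood
  have hNB : ∀ x : Fin n, x ∈ T.neighborFinset v ↔ (x : ℕ) % k ≠ s := by
    intro x
    rw [SimpleGraph.mem_neighborFinset]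
    show ((v : ℕ) % k ≠ (x : ℕ) % k) ↔ _
    rw [hvs]
    exact ne_comm
  -- the reindexing map
  set ρ : Fin n → ℕ := fun x => if (x : ℕ) % k < s then (x : ℕ) % k else (x : ℕ) % k - 1 with hρ
  -- cardinality of the neighborhood
  have hcards : (Finset.univ.filter (fun x : Fin n => (x : ℕ) % k = s)).card = q + 1 := by
    rw [count_mod_fin k hk0 s hsk n]
    rcases hnmod with ⟨h1, h2, h3⟩ | ⟨h1, h2, h3⟩ <;> rw [h1, h2] <;> split_ifs <;> omega
  have hNBcard : (T.neighborFinset v).card = m := by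
    have hsplit := Finset.card_filter_add_card_filter_not
      (s := (Finset.univ : Finset (Fin n))) (p := fun x : Fin n => (x : ℕ) % k = s)
    have heq : T.neighborFinset v = Finset.univ.filter (fun x : Fin n => ¬ (x : ℕ) % k = s) := by
      ext x
      rw [hNB x, Finset.mem_filter]
      simp
    rw [heq]
    have hcu : (Finset.univ : Finset (Fin n)).card = n := by simp
    omega
  -- fiber cardinalities
  have hfibercard : ∀ c : ℕ,
      Fintype.card {y : Fin m // (y : ℕ) % (k-1) = c}
        = Fintype.card {x : {z : Fin n // z ∈ T.neighborFinset v} // ρ x.1 = c} := by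
    intro c
    have hRHS : Fintype.card {x : {z : Fin n // z ∈ T.neighborFinset v} // ρ x.1 = c}
        = (Finset.univ.filter (fun z : Fin n => z ∈ T.neighborFinset v ∧ ρ z = c)).card := by
      rw [← Fintype.card_subtype]
      exact Fintype.card_congr (Equiv.subtypeSubtypeEquivSubtypeInter
        (fun z : Fin n => z ∈ T.neighborFinset v) (fun z => ρ z = c))
    rw [hRHS, Fintype.card_subtype]
    rcases Nat.lt_or_ge c (k-1) with hck | hck
    · -- interesting case
      set σc := if c < s then c else c + 1 with hσc
      have hσlt : σc < k := by rw [hσc]; split_ifs <;> omega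
      have hpred : ∀ z : Fin n, (z ∈ T.neighborFinset v ∧ ρ z = c) ↔ (z : ℕ) % k = σc := by
        intro z
        rw [hNB z, hρ, hσc]
        have := Nat.mod_lt (z : ℕ) hk0
        dsimp only
        split_ifs <;> omega
      rw [show (Finset.univ.filter (fun z : Fin n => z ∈ T.neighborFinset v ∧ ρ z = c))
            = Finset.univ.filter (fun z : Fin n => (z : ℕ) % k = σc) from
          Finset.filter_congr (fun z _ => hpred z),
        count_mod_fin k hk0 σc hσlt n, count_mod_fin (k-1) hk1 c hck m]
      rw [hσc]
      rcases hnmod with ⟨h1, h2, h3⟩ | ⟨h1, h2, h3⟩ <;>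
        rcases hmmod with ⟨g1, g2, g3⟩ | ⟨g1, g2, g3⟩ <;>
        rw [h1, h2, g1, g2] <;> split_ifs <;> omega
    · -- both empty
      have h1 : ∀ y : Fin m, ¬ ((y : ℕ) % (k-1) = c) := by
        intro y hy
        have := Nat.mod_lt (y : ℕ) hk1
        omega
      have h2 : ∀ z : Fin n, ¬ (z ∈ T.neighborFinset v ∧ ρ z = c) := by
        rintro z ⟨hz1, hz2⟩
        rw [hNB z] at hz1
        have := Nat.mod_lt (z : ℕ) hk0
        rw [hρ] at hz2
        dsimp only at hz2
        split_ifs at hz2 <;> omega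
      rw [Finset.filter_false_of_mem (fun y _ => h1 y), Finset.filter_false_of_mem (fun z _ => h2 z)]
      simp
  -- the equivalence
  obtain ⟨E, hE⟩ : ∃ E : Fin m ≃ {z : Fin n // z ∈ T.neighborFinset v},
      ∀ y : Fin m, ρ (E y).1 = (y : ℕ) % (k-1) :=
    ⟨Equiv.ofFiberEquiv (f := fun y : Fin m => (y : ℕ) % (k-1)) (g := fun x => ρ x.1)
      (fun c => Fintype.equivOfCardEq (hfibercard c)),
     fun y => Equiv.ofFiberEquiv_map (fun c => Fintype.equivOfCardEq (hfibercard c)) y⟩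
  -- split the Turán clique count
  have hsplit := cN_split (G := T) (r := r+1) (v := v) (Finset.mem_univ v)
  rw [Finset.univ_inter] at hsplit
  -- part (a) : cliques avoiding v
  have hpartA : cN T (r+2) (Finset.univ.erase v) = tN (r+2) (n-1) k := by
    rw [tN]
    refine cN_transfer T (turanGraph (n-1) k) (fun y => Fin.castLE (by omega) y) ?_ ?_ ?_ (r+2)
    · intro a b hab
      exact Fin.castLE_injective _ hab
    · intro x
      rw [Finset.mem_erase]
      constructor
      · rintro ⟨hx1, -⟩
        have hxn : (x : ℕ) < n := x.2
        have hxv : (x : ℕ) ≠ n - 1 := fun hc => hx1 (Fin.ext hc)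
        exact ⟨⟨(x : ℕ), by omega⟩, Fin.ext rfl⟩
      · rintro ⟨y, rfl⟩
        refine ⟨fun hc => ?_, Finset.mem_univ _⟩
        have := y.2
        have := congrArg (fun z : Fin n => (z : ℕ)) hc
        simp [hv] at this
        omega
    · intro y y'
      constructor
      · intro h; exact h
      · intro h; exact h
  -- part (b) : the neighborhood
  have hpartB : cN T (r+1) (T.neighborFinset v) = tN (r+1) m (k-1) := by
    rw [tN]
    refine cN_transfer T (turanGraph m (k-1)) (fun y => (E y).1) ?_ ?_ ?_ (r+1)
    · intro a b hab
      exact E.injective (Subtype.ext hab)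
    · intro x
      constructor
      · intro hx
        exact ⟨E.symm ⟨x, hx⟩, by simp⟩
      · rintro ⟨y, rfl⟩
        exact (E y).2
    · intro y y'
      have hyk := Nat.mod_lt (y : ℕ) hk1
      have hyk' := Nat.mod_lt (y' : ℕ) hk1
      have h1 : ((E y).1 : ℕ) % k ≠ s := (hNB _).1 (E y).2
      have h2 : ((E y').1 : ℕ) % k ≠ s := (hNB _).1 (E y').2
      have h3 := hE y
      have h4 := hE y'
      rw [hρ] at h3 h4
      dsimp only at h3 h4
      show ((E y).1 : ℕ) % k ≠ ((E y').1 : ℕ) % k ↔ (y : ℕ) % (k-1) ≠ (y' : ℕ) % (k-1)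
      have hl1 := Nat.mod_lt ((E y).1 : ℕ) hk0
      have hl2 := Nat.mod_lt ((E y').1 : ℕ) hk0
      split_ifs at h3 h4 <;> omega
  rw [hpartA, hpartB] at hsplit
  have hgoal : tN (r+2) n k = cN T (r+2) Finset.univ := by rw [tN, hT]
  rw [hgoal, hsplit, ← hm]

/-! ### main bound -/

lemma main_bound : ∀ (n k r : ℕ) {V : Type} [Fintype V] [DecidableEq V] (G : SimpleGraph V)
    [DecidableRel G.Adj] (A : Finset V), 1 ≤ r → r ≤ k → A.card = n →
    (∀ t ⊆ A, ¬ G.IsNClique (k+1) t) → cN G r A ≤ tN r n k := by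
  intro n
  induction n using Nat.strong_induction_on with
  | _ n IH =>
    intro k r V _ _ G _ A hr hrk hA hfree
    match r with
    | 1 =>
      rw [cN_one, hA, tN, cN_one, Finset.card_univ, Fintype.card_fin]
    | (r2+2) =>
      by_cases hnk : n ≤ k
      · calc cN G (r2+2) A ≤ A.card.choose (r2+2) := cN_le_choose
          _ = n.choose (r2+2) := by rw [hA]
          _ = tN (r2+2) n k := (tN_of_le hnk _).symm
      · have hk0 : 0 < k := by omega
        have hn0 : 0 < n := by omega
        obtain ⟨v, hvA, hdeg⟩ := exists_small_deg G hA hk0 hn0 hfree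
        have hc1 : 1 ≤ (n + k - 1)/k := (Nat.one_le_div_iff hk0).2 (by omega)
        have hsplit : cN G (r2+2) A
            = cN G (r2+2) (A.erase v) + cN G (r2+1) (A ∩ G.neighborFinset v) :=
          cN_split (G := G) (r := r2+1) (v := v) hvA
        obtain ⟨d, hd⟩ : ∃ d, (A ∩ G.neighborFinset v).card = d := ⟨_, rfl⟩
        have hdn : d < n := by omega
        have hb1 : cN G (r2+2) (A.erase v) ≤ tN (r2+2) (n-1) k := by
          refine IH (n-1) (by omega) k (r2+2) G (A.erase v) (by omega) hrk ?_ ?_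
          · rw [Finset.card_erase_of_mem hvA, hA]
          · intro t ht
            exact hfree t (ht.trans (Finset.erase_subset _ _))
        have hb2 : cN G (r2+1) (A ∩ G.neighborFinset v) ≤ tN (r2+1) d (k-1) := by
          refine IH d hdn (k-1) (r2+1) G (A ∩ G.neighborFinset v) (by omega) (by omega) hd ?_
          intro t ht htc
          have hk' : k - 1 + 1 = k := by omega
          rw [hk'] at htc
          have hvt : v ∉ t := fun hc =>
            G.notMem_neighborFinset_self v ((Finset.mem_inter.1 (ht hc)).2)
          refine hfree (insert v t) ?_ (htc.insert ?_)
          · intro x hx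
            rcases Finset.mem_insert.1 hx with rfl | hx
            · exact hvA
            · exact (Finset.mem_inter.1 (ht hx)).1
          · intro b hb
            exact (G.mem_neighborFinset v b).1 (Finset.mem_inter.1 (ht hb)).2
        have hb3 : tN (r2+1) d (k-1) ≤ tN (r2+1) (n - (n + k - 1)/k) (k-1) :=
          tN_mono _ _ (by omega)
        have hrec := turan_rec (n := n) (k := k) (r := r2) (by omega) (by omega)
        omega

theorem stmt0 (n k r : ℕ) (h1 : 1 ≤ r) (hrk : r ≤ k) (hkn : k ≤ n) :
    exGen n (completeGraph (Fin r)) (completeGraph (Fin (k + 1)))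
      = _root_.copyCount (completeGraph (Fin r)) (turanGraph n k) := by
  have hk0 : 0 < k := by omega
  have hTfree : FFree (completeGraph (Fin (k+1))) (turanGraph n k) :=
    fFree_iff_cliqueFree.2 (turanGraph_cliqueFree hk0)
  have hTcount : _root_.copyCount (completeGraph (Fin r)) (turanGraph n k) = tN r n k :=
    copyCount_eq_cN
  have hmem : tN r n k ∈ {m | ∃ G : SimpleGraph (Fin n),
      FFree (completeGraph (Fin (k+1))) G ∧ _root_.copyCount (completeGraph (Fin r)) G = m} :=
    ⟨turanGraph n k, hTfree, hTcount⟩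
  have hbound : ∀ x ∈ {m | ∃ G : SimpleGraph (Fin n),
      FFree (completeGraph (Fin (k+1))) G ∧ _root_.copyCount (completeGraph (Fin r)) G = m},
      x ≤ tN r n k := by
    rintro x ⟨G, hGfree, rfl⟩
    have : DecidableRel G.Adj := Classical.decRel _
    rw [copyCount_eq_cN]
    have hcf : G.CliqueFree (k+1) := fFree_iff_cliqueFree.1 hGfree
    refine main_bound n k r G Finset.univ h1 hrk (by simp) ?_
    intro t _ htc
    exact hcf t htc
  rw [exGen, hTcount]
  exact le_antisymm (csSup_le ⟨_, hmem⟩ hbound) (le_csSup ⟨_, hbound⟩ hmem)
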